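/- Let Φ ∈ S₂(E, E_*) and V : H_Φ → K_Φ the canonical isometry. Then the kernel of V* equals {(0, g) ∈ K_Φ : g ∈ (L²⊖H²(E)) ∩ Δ L²(E)}, and as sets H_Φ = {f ∈ H²(E_*) : there exists g with (f, g) ∈ K_Φ}. -/

import Mathlib

/- STATEMENT 11: Let Φ ∈ S₂(E,E_*) and V : H_Φ → K_Φ the canonical isometry
(V(D_{Φ*}²h) = P_Φ(h, Φ*h), V*(f,g) = f).  Then
ker V* = {(0, g) ∈ K_Φ : g ∈ (L²⊖H²(E)) ∩ ΔL²(E)}, and, as sets,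
H_Φ = {f ∈ H²(E_*) : there exists g with (f, g) ∈ K_Φ}.

Setting as in Statement 10; in addition Δ = (I − Φ*Φ)^{1/2} on L²(E).  Since
ker V* = (range V)^⊥ ∩ K_Φ, the first conclusion says: an element p ∈ K_Φ is ℋ-orthogonal
to the range of V iff its first component vanishes and its second lies in Δ L²(E).
The second conclusion identifies the underlying set of H_Φ (the operator range of D,
transported to L²(E_*) by the boundary-value embedding j) with
{f : ∃ g, (f,g) ∈ K_Φ}. -/

open scoped ComplexInnerProductSpace

noncomputable def c1 {A B : Type*} [NormedAddCommGroup A] [NormedAddCommGroup B]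
    (x : WithLp 2 (A × B)) : A := (WithLp.equiv 2 (A × B) x).1

noncomputable def c2 {A B : Type*} [NormedAddCommGroup A] [NormedAddCommGroup B]
    (x : WithLp 2 (A × B)) : B := (WithLp.equiv 2 (A × B) x).2

noncomputable def pr {A B : Type*} [NormedAddCommGroup A] [NormedAddCommGroup B]
    (f : A) (g : B) : WithLp 2 (A × B) := (WithLp.equiv 2 (A × B)).symm (f, g)

lemma douglas {H : Type*} [NormedAddCommGroup H] [InnerProductSpace ℂ H] [CompleteSpace H]
    (T : H →L[ℂ] H) (hT : IsSelfAdjoint T) (g : H) (C : ℝ)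
    (hb : ∀ y, ‖(⟪g, y⟫ : ℂ)‖ ≤ C * ‖T y‖) : g ∈ Set.range T := by
  classical
  set T' : H →ₗ[ℂ] H := (T : H →ₗ[ℂ] H) with hT'
  set R : Submodule ℂ H := LinearMap.range T' with hR
  set ψ : H →ₗ[ℂ] ℂ := (innerSL ℂ g).toLinearMap with hψ
  have hker : LinearMap.ker T' ≤ LinearMap.ker ψ := by
    intro y hy
    have hy' : T y = 0 := hy
    have := hb y
    rw [hy', norm_zero, mul_zero] at this
    have : (⟪g, y⟫ : ℂ) = 0 := norm_le_zero_iff.mp this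
    simpa [hψ] using this
  set χ₀ : ↥R →ₗ[ℂ] ℂ :=
    ((LinearMap.ker T').liftQ ψ hker).comp T'.quotKerEquivRange.symm.toLinearMap with hχ₀
  have key : ∀ y : H, ∀ h : T y ∈ R, χ₀ ⟨T y, h⟩ = ⟪g, y⟫ := by
    intro y h
    have h1 : T'.quotKerEquivRange.symm ⟨T' y, by exact h⟩ = (LinearMap.ker T').mkQ y :=
      T'.quotKerEquivRange_symm_apply_image y (by exact h)
    simp only [hχ₀, LinearMap.comp_apply, LinearEquiv.coe_toLinearMap]
    rw [show (⟨T y, h⟩ : ↥R) = ⟨T' y, by exact h⟩ from rfl, h1]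
    simp [hψ]
  have bound : ∀ v : ↥R, ‖χ₀ v‖ ≤ (max C 0) * ‖v‖ := by
    rintro ⟨v, hv⟩
    obtain ⟨y, rfl⟩ := hv
    have h1 : ‖(⟨T' y, ⟨y, rfl⟩⟩ : ↥R)‖ = ‖T y‖ := rfl
    rw [h1, show (⟨T' y, ⟨y, rfl⟩⟩ : ↥R) = ⟨T y, ⟨y, rfl⟩⟩ from rfl, key y ⟨y, rfl⟩]
    calc ‖(⟪g, y⟫ : ℂ)‖ ≤ C * ‖T y‖ := hb y
      _ ≤ max C 0 * ‖T y‖ := mul_le_mul_of_nonneg_right (le_max_left _ _) (norm_nonneg _)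
  set χ₀c : ↥R →L[ℂ] ℂ := χ₀.mkContinuous (max C 0) bound with hχ₀c
  set W : Submodule ℂ H := R.topologicalClosure with hW
  haveI : CompleteSpace ↥W := @IsClosed.completeSpace_coe _ _ _ _ R.isClosed_topologicalClosure
  set eL : ↥R →ₗ[ℂ] ↥W := Submodule.inclusion R.le_topologicalClosure with heL
  have heLnorm : ∀ v : ↥R, ‖eL v‖ = ‖v‖ := fun v => rfl
  set e : ↥R →L[ℂ] ↥W := eL.mkContinuous 1 (fun v => by rw [heLnorm, one_mul]) with he
  have h_e : IsUniformInducing e := by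
    apply AddMonoidHomClass.isometry_of_norm e (fun v => rfl) |>.isUniformInducing
  have h_dense : DenseRange e := by
    intro w
    have hw : (w : H) ∈ closure (R : Set H) := by
      have := w.2
      rwa [hW, ← Submodule.topologicalClosure_coe] at *
    rw [mem_closure_iff_seq_limit] at hw
    obtain ⟨s, hs, hlim⟩ := hw
    rw [mem_closure_iff_seq_limit]
    refine ⟨fun n => e ⟨s n, hs n⟩, fun n => ⟨⟨s n, hs n⟩, rfl⟩, ?_⟩
    rw [tendsto_subtype_rng]
    exact hlim
  set χ : ↥W →L[ℂ] ℂ := χ₀c.extend e with hχ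
  set u' : ↥W := (InnerProductSpace.toDual ℂ ↥W).symm χ with hu'
  refine ⟨(u' : H), ?_⟩
  have main : ∀ y : H, (⟪T (u' : H), y⟫ : ℂ) = ⟪g, y⟫ := by
    intro y
    have h1 : (⟪(u' : H), T y⟫ : ℂ) = ⟪g, y⟫ := by
      have hTy : T y ∈ R := ⟨y, rfl⟩
      have hTyW : T y ∈ W := R.le_topologicalClosure hTy
      have he1 : e ⟨T y, hTy⟩ = (⟨T y, hTyW⟩ : ↥W) := rfl
      have h2 : χ (⟨T y, hTyW⟩ : ↥W) = ⟪g, y⟫ := by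
        rw [← he1, hχ, ContinuousLinearMap.extend_eq (h_dense := h_dense) (h_e := h_e)]
        show χ₀ ⟨T y, hTy⟩ = _
        exact key y hTy
      have h3 : (⟪u', (⟨T y, hTyW⟩ : ↥W)⟫ : ℂ) = χ (⟨T y, hTyW⟩ : ↥W) :=
        InnerProductSpace.toDual_symm_apply
      rw [h2] at h3
      rw [← h3, Submodule.coe_inner]
    calc (⟪T (u' : H), y⟫ : ℂ) = ⟪(u' : H), T y⟫ := by
          conv_lhs => rw [← hT.adjoint_eq]
          rw [ContinuousLinearMap.adjoint_inner_left]
      _ = ⟪g, y⟫ := h1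
  have := ext_inner_right ℂ main
  exact this


section Main

set_option linter.unusedSectionVars false

variable {L2E L2Es H2 : Type*}
    [NormedAddCommGroup L2E] [InnerProductSpace ℂ L2E] [CompleteSpace L2E]
    [NormedAddCommGroup L2Es] [InnerProductSpace ℂ L2Es] [CompleteSpace L2Es]
    [NormedAddCommGroup H2] [InnerProductSpace ℂ H2] [CompleteSpace H2]

lemma pr_c1_c2 (x : WithLp 2 (L2Es × L2E)) : pr (c1 x) (c2 x) = x := rfl

lemma inner_pr_pr (a c : L2Es) (b d : L2E) :
    (⟪pr a b, pr c d⟫ : ℂ) = ⟪a, c⟫ + ⟪b, d⟫ := rfl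

lemma pr_sub (a c : L2Es) (b d : L2E) : pr a b - pr c d = pr (a - c) (b - d) := rfl

lemma c1_pr (a : L2Es) (b : L2E) : c1 (pr a b) = a := rfl
lemma c2_pr (a : L2Es) (b : L2E) : c2 (pr a b) = b := rfl

set_option maxHeartbeats 1000000 in
set_option synthInstance.maxHeartbeats 400000 in
theorem stmt_11'
    (MΦ : L2E →L[ℂ] L2Es) (hMΦ : ‖MΦ‖ ≤ 1)
    (S : WithLp 2 (L2Es × L2E) →L[ℂ] WithLp 2 (L2Es × L2E))
    (hS : IsSelfAdjoint S) (hSpos : ∀ x, 0 ≤ (⟪S x, x⟫).re)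
    (hS2 : ∀ (f : L2Es) (g : L2E),
      S (S (pr f g)) = pr (f + MΦ g) (ContinuousLinearMap.adjoint MΦ f + g))
    (PpE : L2E →L[ℂ] L2E) (hPpE : IsSelfAdjoint PpE) (hPpE2 : PpE ∘L PpE = PpE)
    (PpEs : L2Es →L[ℂ] L2Es) (hPpEs : IsSelfAdjoint PpEs) (hPpEs2 : PpEs ∘L PpEs = PpEs)
    (hMΦH2 : ∀ h : L2E, PpEs (MΦ (PpE h)) = MΦ (PpE h))
    (Δ : L2E →L[ℂ] L2E) (hΔ : IsSelfAdjoint Δ) (hΔpos : ∀ g, 0 ≤ (⟪Δ g, g⟫).re)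
    (hΔ2 : Δ ∘L Δ = 1 - ContinuousLinearMap.adjoint MΦ ∘L MΦ)
    (j : H2 →L[ℂ] L2Es)
    (hj : ∀ x y : H2, ⟪j x, j y⟫ = ⟪x, y⟫)
    (hjrange : Set.range j = Set.range PpEs)
    (D : H2 →L[ℂ] H2) (hD : IsSelfAdjoint D) (hDpos : ∀ x, 0 ≤ (⟪D x, x⟫).re)
    (hDj : ∀ h : H2, j (D (D h)) =
      j h - PpEs (MΦ (PpE (ContinuousLinearMap.adjoint MΦ (j h)))))
    (PΦ : WithLp 2 (L2Es × L2E) →L[ℂ] WithLp 2 (L2Es × L2E))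
    (hPΦ : ∀ (f : L2Es) (g : L2E),
      PΦ (pr f g) = pr (PpEs f - MΦ (PpE g))
        ((g - PpE g) - ContinuousLinearMap.adjoint MΦ (f - PpEs f)))
    (ipW : WithLp 2 (L2Es × L2E) → WithLp 2 (L2Es × L2E) → ℂ)
    (hipW : ∀ x y, x ∈ (LinearMap.ker (S : WithLp 2 (L2Es × L2E) →ₗ[ℂ] WithLp 2 (L2Es × L2E)))ᗮ → ipW (S x) (S y) = ⟪x, y⟫) :
    (∀ p ∈ Set.range S, PpEs (c1 p) = c1 p → PpE (c2 p) = 0 →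
      ((∀ h : H2, ipW p (PΦ (pr (j h) (ContinuousLinearMap.adjoint MΦ (j h)))) = 0) ↔
        (c1 p = 0 ∧ c2 p ∈ Set.range Δ))) ∧
      ∀ f : L2Es,
        ((∃ g : L2E, pr f g ∈ Set.range S ∧ PpEs f = f ∧ PpE g = 0) ↔
          ∃ x : H2, j (D x) = f) := by
  classical
  set M' := ContinuousLinearMap.adjoint MΦ with hM'
  have hadjS : ∀ x y, (⟪S x, y⟫ : ℂ) = ⟪x, S y⟫ := by
    intro x y
    conv_lhs => rw [← hS.adjoint_eq]
    rw [ContinuousLinearMap.adjoint_inner_left]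
  have hadjPpE : ∀ x y, (⟪PpE x, y⟫ : ℂ) = ⟪x, PpE y⟫ := by
    intro x y
    conv_lhs => rw [← hPpE.adjoint_eq]
    rw [ContinuousLinearMap.adjoint_inner_left]
  have hadjD : ∀ x y, (⟪D x, y⟫ : ℂ) = ⟪x, D y⟫ := by
    intro x y
    conv_lhs => rw [← hD.adjoint_eq]
    rw [ContinuousLinearMap.adjoint_inner_left]
  have hadjΔ : ∀ x y, (⟪Δ x, y⟫ : ℂ) = ⟪x, Δ y⟫ := by
    intro x y
    conv_lhs => rw [← hΔ.adjoint_eq]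
    rw [ContinuousLinearMap.adjoint_inner_left]
  have hPpE_idem : ∀ a, PpE (PpE a) = PpE a := by
    intro a
    have := congrArg (fun T : L2E →L[ℂ] L2E => T a) hPpE2
    simpa using this
  have hPpEs_idem : ∀ a, PpEs (PpEs a) = PpEs a := by
    intro a
    have := congrArg (fun T : L2Es →L[ℂ] L2Es => T a) hPpEs2
    simpa using this
  have hPj : ∀ h : H2, PpEs (j h) = j h := by
    intro h
    have : j h ∈ Set.range PpEs := hjrange ▸ ⟨h, rfl⟩
    obtain ⟨w, hw⟩ := this
    rw [← hw, hPpEs_idem]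
  set w' : H2 → WithLp 2 (L2Es × L2E) := fun h => pr (j h) (-(PpE (M' (j h)))) with hw'
  have hSw : ∀ h : H2,
      S (S (w' h)) = pr (j (D (D h))) (M' (j h) - PpE (M' (j h))) := by
    intro h
    show S (S (pr (j h) (-(PpE (M' (j h)))))) = _
    rw [hS2]
    have h1 : j h + MΦ (-(PpE (M' (j h)))) = j (D (D h)) := by
      rw [hDj h, hMΦH2, map_neg]
      abel
    have h2 : M' (j h) + -(PpE (M' (j h))) = M' (j h) - PpE (M' (j h)) := by abel
    rw [h1, h2]
  have hPΦw : ∀ h : H2, PΦ (pr (j h) (M' (j h))) = S (S (w' h)) := by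
    intro h
    rw [hPΦ, hPj, sub_self, map_zero, sub_zero, hSw]
    congr 1
    rw [hDj h, hMΦH2]
  have hinner_w' : ∀ (p : WithLp 2 (L2Es × L2E)) (h : H2),
      (⟪p, w' h⟫ : ℂ) = ⟪c1 p, j h⟫ - ⟪PpE (c2 p), M' (j h)⟫ := by
    intro p h
    have e0 : (⟪p, w' h⟫ : ℂ) = ⟪c1 p, j h⟫ + ⟪c2 p, -(PpE (M' (j h)))⟫ := rfl
    rw [e0, inner_neg_right, ← hadjPpE]
    ring
  have hnorm : ∀ h : H2, ‖S (w' h)‖ = ‖D h‖ := by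
    intro h
    have key : (⟪S (w' h), S (w' h)⟫ : ℂ) = ⟪D h, D h⟫ := by
      calc (⟪S (w' h), S (w' h)⟫ : ℂ) = ⟪w' h, S (S (w' h))⟫ := hadjS _ _
        _ = ⟪j h, j (D (D h))⟫ + ⟪-(PpE (M' (j h))), M' (j h) - PpE (M' (j h))⟫ := by
            rw [hSw]; rfl
        _ = ⟪D h, D h⟫ := by
            have e2 : (⟪-(PpE (M' (j h))), M' (j h) - PpE (M' (j h))⟫ : ℂ) = 0 := by
              rw [inner_neg_left, inner_sub_right]
              have e3 : (⟪PpE (M' (j h)), M' (j h)⟫ : ℂ)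
                  = ⟪PpE (M' (j h)), PpE (M' (j h))⟫ := by
                have e4 := hadjPpE (PpE (M' (j h))) (M' (j h))
                rw [hPpE_idem] at e4
                rw [e4, ← hadjPpE]
              rw [e3]
              ring
            rw [e2, add_zero, hj, ← hadjD]
    rw [inner_self_eq_norm_sq_to_K, inner_self_eq_norm_sq_to_K] at key
    have key2 : ‖S (w' h)‖ ^ 2 = ‖D h‖ ^ 2 := by exact_mod_cast key
    have := congrArg Real.sqrt key2
    rwa [Real.sqrt_sq (norm_nonneg _), Real.sqrt_sq (norm_nonneg _)] at this
  set v' : L2E → WithLp 2 (L2Es × L2E) := fun y => pr (-(MΦ y)) y with hv'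
  have hSv : ∀ y : L2E, S (S (v' y)) = pr 0 (Δ (Δ y)) := by
    intro y
    show S (S (pr (-(MΦ y)) y)) = _
    rw [hS2]
    have h1 : -(MΦ y) + MΦ y = (0 : L2Es) := by abel
    have h2 : M' (-(MΦ y)) + y = Δ (Δ y) := by
      have := congrArg (fun T : L2E →L[ℂ] L2E => T y) hΔ2
      simp only [ContinuousLinearMap.coe_comp', Function.comp_apply,
        ContinuousLinearMap.coe_sub', ContinuousLinearMap.one_apply, Pi.sub_apply] at this
      rw [this, map_neg]
      abel
    rw [h1, h2]
  have hnormv : ∀ y : L2E, ‖S (v' y)‖ = ‖Δ y‖ := by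
    intro y
    have key : (⟪S (v' y), S (v' y)⟫ : ℂ) = ⟪Δ y, Δ y⟫ := by
      calc (⟪S (v' y), S (v' y)⟫ : ℂ) = ⟪v' y, S (S (v' y))⟫ := hadjS _ _
        _ = ⟪-(MΦ y), (0 : L2Es)⟫ + ⟪y, Δ (Δ y)⟫ := by rw [hSv]; rfl
        _ = ⟪Δ y, Δ y⟫ := by rw [inner_zero_right, zero_add, ← hadjΔ]
    rw [inner_self_eq_norm_sq_to_K, inner_self_eq_norm_sq_to_K] at key
    have key2 : ‖S (v' y)‖ ^ 2 = ‖Δ y‖ ^ 2 := by exact_mod_cast key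
    have := congrArg Real.sqrt key2
    rwa [Real.sqrt_sq (norm_nonneg _), Real.sqrt_sq (norm_nonneg _)] at this
  have hip : ∀ p ∈ Set.range S, ∀ w, ipW p (S (S w)) = ⟪p, w⟫ := by
    rintro p ⟨x, rfl⟩ w
    haveI : T1Space (WithLp 2 (L2Es × L2E)) := inferInstance
    haveI : CompleteSpace (LinearMap.ker (S : WithLp 2 (L2Es × L2E) →ₗ[ℂ] WithLp 2 (L2Es × L2E))) :=
      (ContinuousLinearMap.isClosed_ker S).completeSpace_coe
    set k := (LinearMap.ker (S : WithLp 2 (L2Es × L2E) →ₗ[ℂ] WithLp 2 (L2Es × L2E))).orthogonalProjectionOnto x with hk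
    have hx1 : x - ↑k ∈ (LinearMap.ker (S : WithLp 2 (L2Es × L2E) →ₗ[ℂ] WithLp 2 (L2Es × L2E)))ᗮ :=
      Submodule.sub_starProjection_mem_orthogonal x
    have hSk : S ↑k = 0 := k.2
    have hSx1 : S (x - ↑k) = S x := by rw [map_sub, hSk, sub_zero]
    calc ipW (S x) (S (S w)) = ipW (S (x - ↑k)) (S (S w)) := by rw [hSx1]
      _ = ⟪x - ↑k, S w⟫ := hipW _ _ hx1
      _ = ⟪S (x - ↑k), w⟫ := (hadjS _ _).symm
      _ = ⟪S x, w⟫ := by rw [hSx1]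
  constructor
  · -- part (1)
    intro p hp h1 h2
    have hzero : ∀ h : H2, ipW p (PΦ (pr (j h) (M' (j h)))) = ⟪c1 p, j h⟫ := by
      intro h
      rw [hPΦw, hip p hp, hinner_w', h2, inner_zero_left, sub_zero]
    constructor
    · intro hall
      have hc1 : ∀ h : H2, (⟪c1 p, j h⟫ : ℂ) = 0 := by
        intro h
        rw [← hzero h]
        exact hall h
      have hc1p : c1 p = 0 := by
        have : c1 p ∈ Set.range j := by rw [hjrange]; exact ⟨c1 p, h1⟩
        obtain ⟨y₀, hy₀⟩ := this
        have h3 : (⟪c1 p, j y₀⟫ : ℂ) = 0 := hc1 y₀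
        rw [← hy₀, hj] at h3
        have : y₀ = 0 := inner_self_eq_zero.mp h3
        rw [← hy₀, this, map_zero]
      refine ⟨hc1p, ?_⟩
      obtain ⟨x, hx⟩ := hp
      apply douglas Δ hΔ (c2 p) ‖x‖
      intro y
      have e1 : (⟪c2 p, y⟫ : ℂ) = ⟪p, v' y⟫ := by
        have e0 : (⟪p, v' y⟫ : ℂ) = ⟪c1 p, -(MΦ y)⟫ + ⟪c2 p, y⟫ := rfl
        rw [e0, hc1p, inner_zero_left, zero_add]
      rw [e1, ← hx, hadjS]
      calc ‖(⟪x, S (v' y)⟫ : ℂ)‖ ≤ ‖x‖ * ‖S (v' y)‖ := norm_inner_le_norm _ _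
        _ = ‖x‖ * ‖Δ y‖ := by rw [hnormv]
    · rintro ⟨hc1, -⟩ h
      rw [hzero h, hc1, inner_zero_left]
  · -- part (2)
    intro f
    constructor
    · rintro ⟨g, ⟨z, hz⟩, hf, hg⟩
      have hfj : f ∈ Set.range j := by rw [hjrange]; exact ⟨f, hf⟩
      obtain ⟨y₀, hy₀⟩ := hfj
      have : y₀ ∈ Set.range D := by
        apply douglas D hD y₀ ‖z‖
        intro h
        have e1 : (⟪y₀, h⟫ : ℂ) = ⟪pr f g, w' h⟫ := by
          rw [hinner_w', c1_pr, c2_pr, hg, inner_zero_left, sub_zero, ← hy₀, hj]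
        rw [e1, ← hz, hadjS]
        calc ‖(⟪z, S (w' h)⟫ : ℂ)‖ ≤ ‖z‖ * ‖S (w' h)‖ := norm_inner_le_norm _ _
          _ = ‖z‖ * ‖D h‖ := by rw [hnorm]
      obtain ⟨x, hx⟩ := this
      exact ⟨x, by rw [hx, hy₀]⟩
    · rintro ⟨x, rfl⟩
      set RD : Submodule ℂ H2 := LinearMap.range (D : H2 →ₗ[ℂ] H2) with hRD
      set WD := RD.topologicalClosure with hWD
      haveI : CompleteSpace WD :=
        @IsClosed.completeSpace_coe _ _ _ _ (Submodule.isClosed_topologicalClosure RD)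
      set v := WD.orthogonalProjectionOnto x with hv
      have hr : x - ↑v ∈ WDᗮ := Submodule.sub_starProjection_mem_orthogonal x
      have hDr : D (x - ↑v) = 0 := by
        have hmem : x - ↑v ∈ RDᗮ :=
          Submodule.orthogonal_le (Submodule.le_topologicalClosure RD) hr
        have h3 : (⟪D (D (x - ↑v)), x - ↑v⟫ : ℂ) = 0 :=
          (Submodule.mem_orthogonal RD (x - ↑v)).mp hmem _ ⟨D (x - ↑v), rfl⟩
        rw [hadjD] at h3
        exact inner_self_eq_zero.mp h3
      have hDx : D ↑v = D x := by
        have := map_sub D x ↑v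
        rw [hDr] at this
        have := sub_eq_zero.mp this.symm
        exact this.symm
      have hvmem : (↑v : H2) ∈ closure (RD : Set H2) := by
        rw [← Submodule.topologicalClosure_coe]
        exact v.2
      rw [mem_closure_iff_seq_limit] at hvmem
      obtain ⟨s, hsmem, hslim⟩ := hvmem
      choose y hy using hsmem
      replace hy : ∀ n, D (y n) = s n := hy
      set z : ℕ → WithLp 2 (L2Es × L2E) := fun n => S (w' (y n)) with hzdef
      have hzdiff : ∀ n m, ‖z n - z m‖ = ‖s n - s m‖ := by
        intro n m
        have e1 : w' (y n) - w' (y m) = w' (y n - y m) := by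
          show pr _ _ - pr _ _ = pr _ _
          rw [pr_sub]
          congr 1
          · rw [map_sub]
          · rw [map_sub j, map_sub M', map_sub PpE]
            abel
        calc ‖z n - z m‖ = ‖S (w' (y n - y m))‖ := by rw [hzdef]; dsimp only; rw [← map_sub, e1]
          _ = ‖D (y n - y m)‖ := hnorm _
          _ = ‖s n - s m‖ := by rw [map_sub, hy, hy]
      have hcauchy : CauchySeq z := by
        have hcs : CauchySeq s := hslim.cauchySeq
        rw [Metric.cauchySeq_iff] at hcs ⊢
        intro ε hε
        obtain ⟨N, hN⟩ := hcs ε hε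
        refine ⟨N, fun n hn m hm => ?_⟩
        rw [dist_eq_norm, hzdiff, ← dist_eq_norm]
        exact hN n hn m hm
      obtain ⟨zlim0, hzlim⟩ := cauchySeq_tendsto_of_complete hcauchy
      have hSz : Filter.Tendsto (fun n => S (z n)) Filter.atTop (nhds (S zlim0)) :=
        (S.continuous.tendsto _).comp hzlim
      have hSzn : ∀ n, S (z n) = pr (j (D (s n))) (M' (j (y n)) - PpE (M' (j (y n)))) := by
        intro n
        rw [hzdef]
        dsimp only
        rw [hSw, hy]
      set κ := WithLp.prodContinuousLinearEquiv 2 ℂ L2Es L2E with hκ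
      have hc1cont : Continuous fun u : WithLp 2 (L2Es × L2E) => c1 u :=
        continuous_fst.comp κ.continuous
      have hc2cont : Continuous fun u : WithLp 2 (L2Es × L2E) => c2 u :=
        continuous_snd.comp κ.continuous
      have hc1lim : Filter.Tendsto (fun n => c1 (S (z n))) Filter.atTop (nhds (c1 (S zlim0))) :=
        (hc1cont.tendsto _).comp hSz
      have hc1lim' : Filter.Tendsto (fun n => j (D (s n))) Filter.atTop (nhds (j (D ↑v))) :=
        ((j.comp D).continuous.tendsto _).comp hslim
      have hc1eq : ∀ n, c1 (S (z n)) = j (D (s n)) := by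
        intro n; rw [hSzn n, c1_pr]
      have hc1val : c1 (S zlim0) = j (D x) := by
        rw [← hDx]
        have heq1 : (fun n => c1 (S (z n))) = fun n => j (D (s n)) := funext hc1eq
        rw [heq1] at hc1lim
        exact tendsto_nhds_unique hc1lim hc1lim'
      have hc2lim : Filter.Tendsto (fun n => PpE (c2 (S (z n)))) Filter.atTop
          (nhds (PpE (c2 (S zlim0)))) :=
        ((PpE.continuous.tendsto _).comp ((hc2cont.tendsto _).comp hSz))
      have hc2zero : ∀ n, PpE (c2 (S (z n))) = 0 := by
        intro n
        rw [hSzn n, c2_pr, map_sub, hPpE_idem, sub_self]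
      have hc2val : PpE (c2 (S zlim0)) = 0 := by
        have heq2 : (fun n => PpE (c2 (S (z n)))) = fun _ => (0 : L2E) := funext hc2zero
        rw [heq2] at hc2lim
        exact (tendsto_nhds_unique hc2lim tendsto_const_nhds).symm.symm
      refine ⟨c2 (S zlim0), ⟨zlim0, ?_⟩, hPj _, hc2val⟩
      conv_lhs => rw [← pr_c1_c2 (S zlim0)]
      rw [hc1val]
  
end Main

theorem stmt_11 {L2E L2Es H2 : Type*}
    [NormedAddCommGroup L2E] [InnerProductSpace ℂ L2E] [CompleteSpace L2E]
    [NormedAddCommGroup L2Es] [InnerProductSpace ℂ L2Es] [CompleteSpace L2Es]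
    [NormedAddCommGroup H2] [InnerProductSpace ℂ H2] [CompleteSpace H2]
    (MΦ : L2E →L[ℂ] L2Es) (hMΦ : ‖MΦ‖ ≤ 1)
    (S : WithLp 2 (L2Es × L2E) →L[ℂ] WithLp 2 (L2Es × L2E))
    (hS : IsSelfAdjoint S) (hSpos : ∀ x, 0 ≤ (⟪S x, x⟫).re)
    (hS2 : ∀ (f : L2Es) (g : L2E),
      S (S (pr f g)) = pr (f + MΦ g) (ContinuousLinearMap.adjoint MΦ f + g))
    (PpE : L2E →L[ℂ] L2E) (hPpE : IsSelfAdjoint PpE) (hPpE2 : PpE ∘L PpE = PpE)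
    (PpEs : L2Es →L[ℂ] L2Es) (hPpEs : IsSelfAdjoint PpEs) (hPpEs2 : PpEs ∘L PpEs = PpEs)
    (hMΦH2 : ∀ h : L2E, PpEs (MΦ (PpE h)) = MΦ (PpE h))
    -- Δ = (I − Φ*Φ)^{1/2} on L²(E):
    (Δ : L2E →L[ℂ] L2E) (hΔ : IsSelfAdjoint Δ) (hΔpos : ∀ g, 0 ≤ (⟪Δ g, g⟫).re)
    (hΔ2 : Δ ∘L Δ = 1 - ContinuousLinearMap.adjoint MΦ ∘L MΦ)
    -- j : H²(E_*) → L²(E_*), isometric with range H²(E_*):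
    (j : H2 →L[ℂ] L2Es)
    (hj : ∀ x y : H2, ⟪j x, j y⟫ = ⟪x, y⟫)
    (hjrange : Set.range j = Set.range PpEs)
    -- D = D_{Φ*}:
    (D : H2 →L[ℂ] H2) (hD : IsSelfAdjoint D) (hDpos : ∀ x, 0 ≤ (⟪D x, x⟫).re)
    (hDj : ∀ h : H2, j (D (D h)) =
      j h - PpEs (MΦ (PpE (ContinuousLinearMap.adjoint MΦ (j h)))))
    -- P_Φ:
    (PΦ : WithLp 2 (L2Es × L2E) →L[ℂ] WithLp 2 (L2Es × L2E))
    (hPΦ : ∀ (f : L2Es) (g : L2E),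
      PΦ (pr f g) = pr (PpEs f - MΦ (PpE g))
        ((g - PpE g) - ContinuousLinearMap.adjoint MΦ (f - PpEs f)))
    -- the operator-range inner product of ℋ:
    (ipW : WithLp 2 (L2Es × L2E) → WithLp 2 (L2Es × L2E) → ℂ)
    (hipW : ∀ x y, x ∈ (LinearMap.ker (S : WithLp 2 (L2Es × L2E) →ₗ[ℂ] WithLp 2 (L2Es × L2E)))ᗮ → ipW (S x) (S y) = ⟪x, y⟫) :
    -- (1) ker V* = {(0,g) ∈ K_Φ : g ∈ (L²⊖H²(E)) ∩ ΔL²(E)}: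
    (∀ p ∈ Set.range S, PpEs (c1 p) = c1 p → PpE (c2 p) = 0 →
      ((∀ h : H2, ipW p (PΦ (pr (j h) (ContinuousLinearMap.adjoint MΦ (j h)))) = 0) ↔
        (c1 p = 0 ∧ c2 p ∈ Set.range Δ))) ∧
      -- (2) as sets, H_Φ = {f ∈ H²(E_*) : ∃ g with (f,g) ∈ K_Φ}:
      ∀ f : L2Es,
        ((∃ g : L2E, pr f g ∈ Set.range S ∧ PpEs f = f ∧ PpE g = 0) ↔
          ∃ x : H2, j (D x) = f) := by
  exact stmt_11' MΦ hMΦ S hS hSpos hS2 PpE hPpE hPpE2 PpEs hPpEs hPpEs2 hMΦH2 Δ hΔ hΔpos hΔ2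
    j hj hjrange D hD hDpos hDj PΦ hPΦ ipW hipW
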